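/- arXiv:1907.12034 — 5 statements merged into one kernel-verified Lean document; each statement's English description precedes it below -/
import Mathlib

section
/- Let σ ≥ 1 and let S be a finite nonempty suffix-closed set of words over the alphabet Fin σ with |S| = n. Let F be the factorial closure of S. Then the number of minimal absent words of F is at most 2·n·σ. -/
/-- A set of words is suffix-closed if it contains every suffix of each of its members. -/
def SuffixClosed {α : Type*} (S : Set (List α)) : Prop :=
  ∀ w ∈ S, ∀ u : List α, u <:+ w → u ∈ S

/-- The factorial closure of a set of words: all factors (contiguous sublists) of its members. -/
def FactClosure {α : Type*} (S : Set (List α)) : Set (List α) :=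
  {u | ∃ w ∈ S, u <:+: w}

/-- The set of minimal absent words of a factor-closed language `L`:
words of length at least 2 that are not in `L` but whose tail and dropLast are in `L`. -/
def MAW {α : Type*} (L : Set (List α)) : Set (List α) :=
  {v | 2 ≤ v.length ∧ v ∉ L ∧ v.tail ∈ L ∧ v.dropLast ∈ L}

/-- The number of minimal absent words of the factorial closure of a finite nonempty
suffix-closed set of `n` words over an alphabet of size `σ ≥ 1` is at most `2·n·σ`. -/
theorem maw_rooted_tree_bound (σ n : ℕ) (hσ : 1 ≤ σ)
    (S : Set (List (Fin σ))) (hfin : S.Finite) (hne : S.Nonempty)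
    (hsc : SuffixClosed S) (hcard : S.ncard = n) :
    (MAW (FactClosure S)).Finite ∧ (MAW (FactClosure S)).ncard ≤ 2 * n * σ := by
  classical
  haveI : NeZero σ := ⟨by omega⟩
  set F := FactClosure S with hF
  -- F is closed under prefixes
  have hpref : ∀ u v : List (Fin σ), u <+: v → v ∈ F → u ∈ F := by
    rintro u v huv ⟨w, hw, hvw⟩
    exact ⟨w, hw, huv.isInfix.trans hvw⟩
  -- every element of F is a prefix of some element of S
  have hwit : ∀ t ∈ F, ∃ x ∈ S, t <+: x := by
    rintro t ⟨w, hw, p, q, hpq⟩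
    refine ⟨t ++ q, hsc w hw _ ⟨p, ?_⟩, ⟨q, rfl⟩⟩
    rw [← hpq, List.append_assoc]
  -- a choice of witness
  let g : List (Fin σ) → List (Fin σ) := fun t =>
    if h : ∃ x ∈ S, t <+: x then h.choose else []
  have hg : ∀ t ∈ F, g t ∈ S ∧ t <+: g t := by
    intro t ht
    have h := hwit t ht
    simp only [g, dif_pos h]
    exact ⟨h.choose_spec.1, h.choose_spec.2⟩
  let f : List (Fin σ) → List (Fin σ) × Fin σ := fun v => (g v.tail, v.headI)
  -- key step: comparable tails force equality
  have key : ∀ v₁ ∈ MAW F, ∀ v₂ ∈ MAW F, v₁.headI = v₂.headI →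
      v₁.tail <+: v₂.tail → v₁ = v₂ := by
    rintro v₁ hv₁ v₂ hv₂ hhead hpre
    obtain ⟨hl₁, hnot₁, htail₁, hdrop₁⟩ := hv₁
    obtain ⟨hl₂, hnot₂, htail₂, hdrop₂⟩ := hv₂
    obtain ⟨a₁, t₁, rfl⟩ : ∃ a t, v₁ = a :: t := by
      cases v₁ with
      | nil => simp at hl₁
      | cons a t => exact ⟨a, t, rfl⟩
    obtain ⟨a₂, t₂, rfl⟩ : ∃ a t, v₂ = a :: t := by
      cases v₂ with
      | nil => simp at hl₂
      | cons a t => exact ⟨a, t, rfl⟩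
    simp only [List.headI_cons, List.tail_cons] at hhead hpre
    subst hhead
    by_cases heq : t₁ = t₂
    · rw [heq]
    · exfalso
      have hlt : t₁.length < t₂.length :=
        lt_of_le_of_ne hpre.length_le (fun h => heq (hpre.eq_of_length h))
      have ht₂ne : t₂ ≠ [] := by intro h; subst h; simp at hlt
      have hpre' : t₁ <+: t₂.dropLast := by
        refine List.prefix_of_prefix_length_le hpre (List.dropLast_prefix _) ?_
        rw [List.length_dropLast]; omega
      have hdl : (a₁ :: t₂).dropLast = a₁ :: t₂.dropLast :=
        List.dropLast_cons_of_ne_nil ht₂ne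
      exact hnot₁ (hpref _ _ (List.cons_prefix_cons.mpr ⟨rfl, hpre'⟩) (hdl ▸ hdrop₂))
  have hinj : Set.InjOn f (MAW F) := by
    intro v₁ hv₁ v₂ hv₂ hfe
    have hhead : v₁.headI = v₂.headI := congrArg Prod.snd hfe
    have hgeq : g v₁.tail = g v₂.tail := congrArg Prod.fst hfe
    obtain ⟨hx₁, hp₁⟩ := hg _ hv₁.2.2.1
    obtain ⟨hx₂, hp₂⟩ := hg _ hv₂.2.2.1
    rw [hgeq] at hp₁
    rcases List.prefix_or_prefix_of_prefix hp₁ hp₂ with h | h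
    · exact key v₁ hv₁ v₂ hv₂ hhead h
    · exact (key v₂ hv₂ v₁ hv₁ hhead.symm h).symm
  -- the target finite set
  let T : Finset (List (Fin σ) × Fin σ) := hfin.toFinset ×ˢ (Finset.univ : Finset (Fin σ))
  have himg : f '' MAW F ⊆ ↑T := by
    rintro _ ⟨v, hv, rfl⟩
    simp only [T, Finset.coe_product, Set.mem_prod, Set.Finite.coe_toFinset, Finset.coe_univ]
    exact ⟨(hg _ hv.2.2.1).1, trivial⟩
  have himgfin : (f '' MAW F).Finite := T.finite_toSet.subset himg
  have hfinMAW : (MAW F).Finite := Set.Finite.of_finite_image himgfin hinj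
  refine ⟨hfinMAW, ?_⟩
  have h1 : (MAW F).ncard = (f '' MAW F).ncard := (Set.ncard_image_of_injOn hinj).symm
  have h2 : (f '' MAW F).ncard ≤ (↑T : Set _).ncard :=
    Set.ncard_le_ncard himg T.finite_toSet
  have h3 : (↑T : Set (List (Fin σ) × Fin σ)).ncard = n * σ := by
    rw [Set.ncard_coe_finset]
    simp only [T, Finset.card_product, Finset.card_univ, Fintype.card_fin]
    rw [← Set.ncard_eq_toFinset_card _ hfin, hcard]
  calc (MAW F).ncard = (f '' MAW F).ncard := h1
    _ ≤ n * σ := h3 ▸ h2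
    _ ≤ 2 * n * σ := by nlinarith
end

section
/- Let S be a suffix-closed set of words over the alphabet Fin σ and let F be the factorial closure of S. If a word of the form a :: u ++ [b] (with a, b ∈ Fin σ) is a minimal absent word of F, then either u ∈ S, or there exists a letter b' ≠ b such that u ++ [b'] ∈ F. -/
/-- If `a :: u ++ [b]` is a minimal absent word of the factorial closure of a suffix-closed
set `S`, then either `u ∈ S`, or `u ++ [b']` is in the factorial closure for some letter
`b' ≠ b` (i.e., `u` corresponds to an explicit node of the suffix tree). -/
theorem maw_explicit_node (σ : ℕ) (S : Set (List (Fin σ))) (hsc : SuffixClosed S)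
    (a b : Fin σ) (u : List (Fin σ))
    (h : a :: (u ++ [b]) ∈ MAW (FactClosure S)) :
    u ∈ S ∨ ∃ b' : Fin σ, b' ≠ b ∧ u ++ [b'] ∈ FactClosure S := by
  obtain ⟨hlen, hnot, htail, hdrop⟩ := h
  have hdrop' : a :: u ∈ FactClosure S := by
    have : (a :: (u ++ [b])).dropLast = a :: u := by
      rw [show a :: (u ++ [b]) = (a :: u) ++ [b] from rfl, List.dropLast_concat]
    rwa [this] at hdrop
  obtain ⟨w, hwS, s, t, hst⟩ := hdrop'
  have hsuf : (a :: u) ++ t <:+ w := ⟨s, by rw [← hst]; simp⟩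
  have hS2 : (a :: u) ++ t ∈ S := hsc w hwS _ hsuf
  cases t with
  | nil =>
    left
    have h1 : a :: u ∈ S := by simpa using hS2
    exact hsc _ h1 u ⟨[a], rfl⟩
  | cons b' t' =>
    by_cases hb : b' = b
    · subst hb
      exact absurd ⟨(a :: u) ++ b' :: t', hS2, [], t', by simp⟩ hnot
    · right
      exact ⟨b', hb, ⟨(a :: u) ++ b' :: t', hS2, [a], t', by simp⟩⟩
end

section
/- Let σ ≥ 1, k ≥ 1, and ℓ ≥ 1. Work over the alphabet Fin (σ+1), where the letter σ (the last element) plays the role of the end-marker $ and the letters 0,…,σ−1 are the content letters. For a word s of length k over the content letters, define w_s = [$] ++ (concatenation over all content letters c, in order, of (c :: s ++ [$]) ++ (s ++ [c, $])). Let s_1, …, s_ℓ be words of length k over the content letters and let w = w_{s_1} ++ w_{s_2} ++ … ++ w_{s_ℓ}. Then for every pair of content letters a, b and every i with 1 ≤ i ≤ ℓ, the word a :: s_i ++ [b] is a minimal absent word of w. -/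
/-- The set of factors of a word `w`. -/
def Factors {α : Type*} (w : List α) : Set (List α) := {u | u <:+: w}

/-- For a word `s` over the content letters of `Fin (σ+1)` (the letter `Fin.last σ` playing
the role of the end-marker `$`), the word
`w_s = $ ++ (concatenation over content letters c of (c s $) ++ (s c $))`. -/
def wordOf (σ : ℕ) (s : List (Fin (σ + 1))) : List (Fin (σ + 1)) :=
  [Fin.last σ] ++
    (List.finRange σ).flatMap (fun c =>
      ((c.castSucc : Fin (σ + 1)) :: (s ++ [Fin.last σ])) ++ (s ++ [c.castSucc, Fin.last σ]))

/-- Key combinatorial lemma: in a concatenation of blocks each of the form `t ++ [d]` with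
`t.length ≤ m`, every factor avoiding the letter `d` has length at most `m`. -/
lemma length_le_of_infix_flatMap {α : Type*} (d : α) (m : ℕ) :
    ∀ L : List (List α), (∀ t ∈ L, t.length ≤ m) →
      ∀ u : List α, u <:+: L.flatMap (fun t => t ++ [d]) → d ∉ u → u.length ≤ m := by
  intro L
  induction L with
  | nil =>
      intro _ u hu _
      simp only [List.flatMap_nil, List.infix_nil] at hu
      simp [hu]
  | cons t L ih =>
      intro hL u hu hd
      obtain ⟨p, q, hpq⟩ := hu
      rw [List.flatMap_cons] at hpq
      by_cases hp : t.length + 1 ≤ p.length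
      · refine ih (fun t' ht' => hL t' (List.mem_cons_of_mem _ ht')) u ⟨p.drop (t.length + 1), q, ?_⟩ hd
        have h := congrArg (List.drop (t.length + 1)) hpq
        rw [List.append_assoc, List.drop_append_of_le_length hp,
          List.drop_append_of_le_length (by simp)] at h
        simpa using h
      · push_neg at hp
        by_contra hlen
        push_neg at hlen
        have ht : t.length ≤ m := hL t List.mem_cons_self
        have hj : t.length - p.length < u.length := by omega
        have h2 : ((t ++ [d]) ++ L.flatMap (fun t => t ++ [d]))[t.length]? = some d := by
          rw [List.append_assoc, List.getElem?_append_right (le_refl _)]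
          simp
        rw [← hpq] at h2
        rw [List.append_assoc, List.getElem?_append_right (by omega : p.length ≤ t.length),
          List.getElem?_append (l₁ := u)] at h2
        rw [if_pos hj] at h2
        obtain ⟨h3, h4⟩ := List.getElem?_eq_some_iff.mp h2
        exact hd (h4 ▸ List.getElem_mem h3)

/-- If `s 1, …, s ℓ` are words of length `k` over the content letters and
`w = w_{s 1} ++ … ++ w_{s ℓ}`, then for all content letters `a, b` and every `i`,
the word `a :: s i ++ [b]` is a minimal absent word of `w`. -/
theorem maw_of_concatenation (σ k ℓ : ℕ) (hσ : 1 ≤ σ) (hk : 1 ≤ k) (hℓ : 1 ≤ ℓ)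
    (s : Fin ℓ → List (Fin (σ + 1)))
    (hlen : ∀ i : Fin ℓ, (s i).length = k)
    (hcontent : ∀ i : Fin ℓ, ∀ x ∈ s i, x.val < σ) :
    ∀ (a b : Fin (σ + 1)), a.val < σ → b.val < σ → ∀ i : Fin ℓ,
      (a :: (s i ++ [b])) ∈
        MAW (Factors ((List.finRange ℓ).flatMap (fun i => wordOf σ (s i)))) := by
  intro a b ha hb i
  set w : List (Fin (σ + 1)) := (List.finRange ℓ).flatMap (fun i => wordOf σ (s i)) with hw
  -- the word of block i is an infix of w
  have hwi : wordOf σ (s i) <:+: w := by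
    obtain ⟨l1, l2, hl⟩ := List.append_of_mem (List.mem_finRange i)
    refine ⟨l1.flatMap (fun j => wordOf σ (s j)), l2.flatMap (fun j => wordOf σ (s j)), ?_⟩
    rw [hw, hl]
    simp
  -- for a content letter c, the block of c is an infix of wordOf σ (s i)
  have hblock : ∀ c : Fin (σ + 1), c.val < σ →
      ((c :: (s i ++ [Fin.last σ])) ++ (s i ++ [c, Fin.last σ])) <:+: wordOf σ (s i) := by
    intro c hc
    set c' : Fin σ := ⟨c.val, hc⟩ with hc'
    have hcast : (c'.castSucc : Fin (σ + 1)) = c := by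
      apply Fin.ext; simp [hc']
    obtain ⟨l1, l2, hl⟩ := List.append_of_mem (List.mem_finRange c')
    refine ⟨[Fin.last σ] ++ l1.flatMap (fun d =>
        ((d.castSucc : Fin (σ + 1)) :: (s i ++ [Fin.last σ])) ++ (s i ++ [d.castSucc, Fin.last σ])),
      l2.flatMap (fun d =>
        ((d.castSucc : Fin (σ + 1)) :: (s i ++ [Fin.last σ])) ++ (s i ++ [d.castSucc, Fin.last σ])), ?_⟩
    rw [wordOf, hl]
    simp [hcast]
  constructor
  · simp
  constructor
  · -- a :: (s i ++ [b]) is not a factor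
    intro hmem
    -- w is a concatenation of blocks t ++ [$] with |t| ≤ k+1
    set segs : List (List (Fin (σ + 1))) := (List.finRange ℓ).flatMap (fun j =>
      [] :: (List.finRange σ).flatMap (fun c =>
        [(c.castSucc : Fin (σ + 1)) :: s j, s j ++ [c.castSucc]])) with hsegs
    have hweq : w = segs.flatMap (fun t => t ++ [Fin.last σ]) := by
      rw [hw, hsegs, List.flatMap_assoc]
      apply List.flatMap_congr
      intro x _
      rw [wordOf, List.flatMap_cons, List.flatMap_assoc]
      simp
    have hseglen : ∀ t ∈ segs, t.length ≤ k + 1 := by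
      intro t ht
      rw [hsegs] at ht
      rw [List.mem_flatMap] at ht
      obtain ⟨j, _, hj⟩ := ht
      rcases List.mem_cons.mp hj with rfl | hj
      · simp
      · rw [List.mem_flatMap] at hj
        obtain ⟨c, _, hc⟩ := hj
        simp only [List.mem_cons, List.not_mem_nil, or_false] at hc
        rcases hc with rfl | rfl <;> simp [hlen j]
    have hlast : Fin.last σ ∉ a :: (s i ++ [b]) := by
      intro hmem'
      rcases List.mem_cons.mp hmem' with h | h
      · have := ha; rw [← h] at this; simp at this
      · rcases List.mem_append.mp h with h' | h'
        · have := hcontent i _ h'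
          simp at this
        · simp only [List.mem_singleton] at h'
          rw [← h'] at hb
          simp at hb
    have := length_le_of_infix_flatMap (Fin.last σ) (k + 1) segs hseglen
      (a :: (s i ++ [b])) (hweq ▸ hmem) hlast
    simp [hlen i] at this
  constructor
  · -- tail
    have h1 : (s i ++ [b]) <:+: ((b :: (s i ++ [Fin.last σ])) ++ (s i ++ [b, Fin.last σ])) := by
      refine ⟨b :: (s i ++ [Fin.last σ]), [Fin.last σ], ?_⟩
      simp
    exact (h1.trans ((hblock b hb).trans hwi))
  · -- dropLast
    have hd : (a :: (s i ++ [b])).dropLast = a :: s i := by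
      rw [show a :: (s i ++ [b]) = (a :: s i) ++ [b] by simp, List.dropLast_concat]
    rw [hd]
    have h1 : (a :: s i) <:+: ((a :: (s i ++ [Fin.last σ])) ++ (s i ++ [a, Fin.last σ])) := by
      refine ⟨[], [Fin.last σ] ++ (s i ++ [a, Fin.last σ]), ?_⟩
      simp
    exact (h1.trans ((hblock a ha).trans hwi))
end

section
/- For every σ ≥ 1, k ≥ 1, and ℓ with 1 ≤ ℓ ≤ σ^k, there exists a word w over the alphabet Fin (σ+1) of length exactly ℓ·(2σ(k+2)+1) such that w has at least σ²·ℓ minimal absent words, all of length exactly k+2. -/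
section Aux

variable {α : Type*} (S : α) (k : ℕ)

/-- Every infix of length `k+2` contains `S`. -/
def Sp (w : List α) : Prop := ∀ v : List α, v <:+: w → v.length = k + 2 → S ∈ v

lemma sp_small {w : List α} (h : w.length < k + 2) : Sp S k w := by
  intro v hv hlen
  have := hv.length_le
  omega

lemma sp_exact {w : List α} (h1 : w.length = k + 2) (h2 : S ∈ w) : Sp S k w := by
  intro v hv hlen
  rw [hv.eq_of_length (by omega)]
  exact h2

lemma sp_append {u v : List α} (hu : Sp S k u) (hv : Sp S k v)
    (hS : u.getLast? = some S) : Sp S k (u ++ v) := by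
  intro x hx hlen
  obtain ⟨s, t, hst⟩ := hx
  by_cases h1 : s.length + x.length ≤ u.length
  · refine hu x ?_ hlen
    have hpre : s ++ x <+: u ++ v := ⟨t, by simpa [List.append_assoc] using hst⟩
    have hpre2 : s ++ x <+: u :=
      List.prefix_of_prefix_length_le hpre (List.prefix_append u v) (by simp; omega)
    exact ((List.suffix_append s x).isInfix).trans hpre2.isInfix
  · by_cases h2 : u.length ≤ s.length
    · refine hv x ?_ hlen
      have hpre : u <+: s :=
        List.prefix_of_prefix_length_le (List.prefix_append u v)
          ⟨x ++ t, by simpa [List.append_assoc] using hst⟩ h2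
      obtain ⟨s', rfl⟩ := hpre
      have hv' : s' ++ x ++ t = v := by
        have := hst
        rw [List.append_assoc u s', List.append_assoc, List.append_assoc] at this
        have := List.append_cancel_left this
        simpa [List.append_assoc] using this
      exact ⟨s', t, hv'⟩
    · push_neg at h1 h2
      have hu_ne : u ≠ [] := by intro h; simp [h] at h2
      have hj1 : u.length - 1 < (u ++ v).length := by
        simp only [List.length_append]; omega
      have hb : u.length - 1 - s.length < x.length := by omega
      have e1 : (u ++ v)[u.length - 1]'hj1 = S := by
        rw [List.getElem_append_left (by omega)]
        have h3 := List.getLast?_eq_getLast hu_ne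
        rw [hS] at h3
        have h4 := List.getLast_eq_getElem hu_ne
        rw [← h4, ← Option.some_inj, ← h3]
      have hj2 : u.length - 1 < (s ++ x ++ t).length := by rw [hst]; exact hj1
      have e2' : (s ++ x ++ t)[u.length - 1]'hj2 = (u ++ v)[u.length - 1]'hj1 :=
        List.getElem_of_eq hst _
      have hj3 : u.length - 1 < (s ++ x).length := by simp; omega
      have e2 : (u ++ v)[u.length - 1]'hj1 = x[u.length - 1 - s.length]'hb := by
        rw [← e2', List.getElem_append_left hj3, List.getElem_append_right (by omega)]
      rw [e1] at e2
      exact e2 ▸ List.getElem_mem hb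

lemma sp_flatten : ∀ L : List (List α), (∀ x ∈ L, Sp S k x ∧ x.getLast? = some S) →
    Sp S k L.flatten ∧ (L.flatten.getLast? = some S ∨ L.flatten = [])
  | [], _ => ⟨sp_small S k (by simp), Or.inr rfl⟩
  | x :: L, h => by
    obtain ⟨hx, hxS⟩ := h x (List.mem_cons_self)
    obtain ⟨hL, hL2⟩ := sp_flatten L (fun y hy => h y (List.mem_cons_of_mem _ hy))
    rw [List.flatten_cons]
    refine ⟨sp_append S k hx hL hxS, Or.inl ?_⟩
    rcases hL2 with h2 | h2
    · rw [List.getLast?_append_of_ne_nil x (by intro hnil; simp [hnil] at h2)]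
      exact h2
    · simp [h2, hxS]

end Aux

/-- For every `σ ≥ 1`, `k ≥ 1` and `1 ≤ ℓ ≤ σ^k`, there is a word `w` over `Fin (σ+1)` of
length exactly `ℓ·(2σ(k+2)+1)` having at least `σ²·ℓ` minimal absent words, all of
length exactly `k+2`. -/
theorem many_maws_of_fixed_length (σ k ℓ : ℕ) (hσ : 1 ≤ σ) (hk : 1 ≤ k)
    (hℓ : 1 ≤ ℓ) (hℓ' : ℓ ≤ σ ^ k) :
    ∃ w : List (Fin (σ + 1)),
      w.length = ℓ * (2 * σ * (k + 2) + 1) ∧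
      σ ^ 2 * ℓ ≤ {v | v ∈ MAW (Factors w) ∧ v.length = k + 2}.ncard := by
  classical
  set S : Fin (σ + 1) := Fin.last σ with hSdef
  let x : Fin ℓ → List (Fin (σ + 1)) := fun i =>
    List.ofFn (fun j => (finFunctionFinEquiv.symm
      (Fin.castLE hℓ' i) j).castSucc)
  have hxlen : ∀ i, (x i).length = k := fun i => by simp [x]
  have hxinj : Function.Injective x := by
    intro i j hij
    have h1 := List.ofFn_injective hij
    have h2 : (finFunctionFinEquiv.symm (Fin.castLE hℓ' i)) =
        (finFunctionFinEquiv.symm (Fin.castLE hℓ' j)) := by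
      funext t
      exact Fin.castSucc_injective _ (congrFun h1 t)
    have h3 := finFunctionFinEquiv.symm.injective h2
    exact Fin.castLE_injective hℓ' h3
  have hSx : ∀ i, S ∉ x i := by
    intro i hmem
    simp only [x, List.mem_ofFn] at hmem
    obtain ⟨j, hj⟩ := hmem
    exact absurd hj (Fin.ne_of_lt (Fin.castSucc_lt_last _))
  -- the parts of each block
  let parts : Fin ℓ → List (List (Fin (σ + 1))) := fun i =>
    [S] :: (((List.finRange σ).map fun a => (a.castSucc :: x i) ++ [S]) ++
      ((List.finRange σ).map fun b => (x i ++ [b.castSucc]) ++ [S]))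
  let block : Fin ℓ → List (Fin (σ + 1)) := fun i => (parts i).flatten
  let w : List (Fin (σ + 1)) := ((List.finRange ℓ).map block).flatten
  have hpartsP : ∀ i, ∀ p ∈ parts i, Sp S k p ∧ p.getLast? = some S := by
    intro i p hp
    simp only [parts, List.mem_cons, List.mem_append, List.mem_map] at hp
    rcases hp with rfl | ⟨a, _, rfl⟩ | ⟨b, _, rfl⟩
    · exact ⟨sp_small S k (by simp), rfl⟩
    · exact ⟨sp_exact S k (by simp [hxlen]) (by simp), List.getLast?_concat⟩
    · exact ⟨sp_exact S k (by simp [hxlen]) (by simp), List.getLast?_concat⟩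
  have hblock : ∀ i, Sp S k (block i) ∧ (block i).getLast? = some S := by
    intro i
    obtain ⟨h1, h2⟩ := sp_flatten S k (parts i) (hpartsP i)
    refine ⟨h1, ?_⟩
    rcases h2 with h2 | h2
    · exact h2
    · exfalso
      have : ([S] : List (Fin (σ+1))) ∈ parts i := List.mem_cons_self
      have h3 : S ∈ (parts i).flatten := List.mem_flatten.2 ⟨[S], this, by simp⟩
      rw [h2] at h3; simp at h3
  have hw : Sp S k w := by
    refine (sp_flatten S k _ ?_).1
    intro y hy
    simp only [List.mem_map] at hy
    obtain ⟨i, _, rfl⟩ := hy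
    exact hblock i
  have hblocklen : ∀ i, (block i).length = 2 * σ * (k + 2) + 1 := by
    intro i
    simp only [block, parts, List.length_flatten, List.map_cons, List.map_append,
      List.map_map, List.sum_cons, List.sum_append]
    have hc : ∀ (f : Fin σ → List (Fin (σ+1))), (∀ a, (f a).length = k + 2) →
        ((List.finRange σ).map (List.length ∘ f)).sum = σ * (k + 2) := by
      intro f hf
      have : (List.finRange σ).map (List.length ∘ f) =
          List.replicate σ (k + 2) := by
        rw [List.eq_replicate_iff]
        constructor
        · simp
        · intro b hb
          simp only [List.mem_map] at hb
          obtain ⟨a, _, rfl⟩ := hb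
          exact hf a
      rw [this, List.sum_replicate, smul_eq_mul]
    rw [hc _ (fun a => by simp [hxlen]), hc _ (fun b => by simp [hxlen])]
    simp only [List.length_singleton]
    ring
  have hwlen : w.length = ℓ * (2 * σ * (k + 2) + 1) := by
    simp only [w, List.length_flatten, List.map_map]
    have : (List.finRange ℓ).map (List.length ∘ block) =
        List.replicate ℓ (2 * σ * (k + 2) + 1) := by
      rw [List.eq_replicate_iff]
      refine ⟨by simp, ?_⟩
      intro b hb
      simp only [List.mem_map] at hb
      obtain ⟨i, _, rfl⟩ := hb
      exact hblocklen i
    rw [this, List.sum_replicate, smul_eq_mul]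
  refine ⟨w, hwlen, ?_⟩
  -- the injection giving many MAWs
  let f : Fin σ × Fin ℓ × Fin σ → List (Fin (σ + 1)) := fun p =>
    (p.1.castSucc :: x p.2.1) ++ [p.2.2.castSucc]
  have hflen : ∀ p, (f p).length = k + 2 := by
    intro p; simp [f, hxlen]
  have hfinj : Function.Injective f := by
    rintro ⟨a, i, b⟩ ⟨a', i', b'⟩ hab
    simp only [f, List.cons_append, List.cons.injEq] at hab
    obtain ⟨ha, hx'⟩ := hab
    obtain ⟨hxx, hbb⟩ := List.append_inj hx' (by rw [hxlen, hxlen])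
    have : a = a' := Fin.castSucc_injective _ ha
    have : i = i' := hxinj hxx
    have : b = b' := Fin.castSucc_injective _ (by simpa using hbb)
    simp_all
  have hblockinfix : ∀ i, block i <:+: w :=
    fun i => List.infix_of_mem_flatten (List.mem_map_of_mem (f := block) (List.mem_finRange i))
  have hmaw : ∀ p, f p ∈ MAW (Factors w) := by
    rintro ⟨a, i, b⟩
    refine ⟨by rw [hflen]; omega, ?_, ?_, ?_⟩
    · -- not a factor: contains no S but has length k+2
      intro hfac
      have hS : S ∈ f (a, i, b) := hw _ hfac (hflen _)
      have h1 : S ≠ a.castSucc := Ne.symm (Fin.ne_of_lt (Fin.castSucc_lt_last a))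
      have h2 : S ≠ b.castSucc := Ne.symm (Fin.ne_of_lt (Fin.castSucc_lt_last b))
      simp only [f, List.cons_append, List.mem_cons, List.mem_append,
        List.mem_singleton] at hS
      rcases hS with h | h | h | h
      · exact h1 h
      · exact hSx i h
      · exact h2 h
      · simp at h
    · -- tail = x i ++ [b] is a factor
      have htail : (f (a, i, b)).tail = x i ++ [b.castSucc] := by
        simp [f]
      rw [htail]
      have hp : (x i ++ [b.castSucc]) ++ [S] ∈ parts i := by
        simp only [parts, List.mem_cons, List.mem_append, List.mem_map]
        exact Or.inr (Or.inr ⟨b, List.mem_finRange b, rfl⟩)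
      have h1 : (x i ++ [b.castSucc]) ++ [S] <:+: block i := List.infix_of_mem_flatten hp
      exact ((List.prefix_append _ _).isInfix.trans h1).trans (hblockinfix i)
    · -- dropLast = a :: x i is a factor
      have hdrop : (f (a, i, b)).dropLast = a.castSucc :: x i := by
        simp only [f, List.dropLast_concat]
      rw [hdrop]
      have hp : (a.castSucc :: x i) ++ [S] ∈ parts i := by
        simp only [parts, List.mem_cons, List.mem_append, List.mem_map]
        exact Or.inr (Or.inl ⟨a, List.mem_finRange a, rfl⟩)
      have h1 : (a.castSucc :: x i) ++ [S] <:+: block i := List.infix_of_mem_flatten hp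
      exact ((List.prefix_append _ _).isInfix.trans h1).trans (hblockinfix i)
  -- counting
  set T : Set (List (Fin (σ + 1))) := {v | v ∈ MAW (Factors w) ∧ v.length = k + 2} with hT
  have hsub : Set.range f ⊆ T := by
    rintro v ⟨p, rfl⟩
    exact ⟨hmaw p, hflen p⟩
  have hTfin : T.Finite := by
    refine (List.finite_length_eq (Fin (σ + 1)) (k + 2)).subset ?_
    intro v hv
    exact hv.2
  have hcard : (Set.range f).ncard = σ ^ 2 * ℓ := by
    rw [← Set.image_univ, Set.ncard_image_of_injective _ hfinj, Set.ncard_univ,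
      Nat.card_eq_fintype_card]
    simp [Fintype.card_prod]
    ring
  calc σ ^ 2 * ℓ = (Set.range f).ncard := hcard.symm
    _ ≤ T.ncard := Set.ncard_le_ncard hsub hTfin
end

section
/- Let σ ≥ 1 and n ≥ 1, let G be a simple graph on Fin n with G.IsTree, and let f : G.edgeSet → Fin σ be an edge labeling. Let L(G,f) be the path language of (G,f). Then the set of minimal absent words of L(G,f) has cardinality at most n²·σ. -/
/-- The path language of an edge-labeled graph: all words obtained as the sequences of
labels of the successive edges of walks that are paths (including trivial walks, which
contribute the empty word). -/
def pathLang {n σ : ℕ} (G : SimpleGraph (Fin n)) (f : G.edgeSet → Fin σ) :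
    Set (List (Fin σ)) :=
  {l | ∃ (u v : Fin n) (p : G.Walk u v), p.IsPath ∧
    l = p.darts.map (fun d => f ⟨d.edge, d.edge_mem⟩)}

private lemma dropLast_append_getLastD {α : Type*} (d : α) :
    ∀ (l : List α), l ≠ [] → l.dropLast ++ [l.getLastD d] = l := by
  intro l h
  rw [List.getLastD_eq_getLast?, List.getLast?_eq_getLast (l := l) h, Option.getD_some,
    List.dropLast_append_getLast h]

/-- The set of minimal absent words of the path language of an edge-labeled unrooted tree
on `n` nodes over an alphabet of size `σ` has cardinality at most `n²·σ`. -/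
theorem maw_unrooted_tree_bound (σ n : ℕ) (hσ : 1 ≤ σ) (hn : 1 ≤ n)
    (G : SimpleGraph (Fin n)) (hG : G.IsTree) (f : G.edgeSet → Fin σ) :
    (MAW (pathLang G f)).Finite ∧ (MAW (pathLang G f)).ncard ≤ n ^ 2 * σ := by
  classical
  let a0 : Fin σ := ⟨0, hσ⟩
  let v0 : Fin n := ⟨0, hn⟩
  let F : List (Fin σ) → Fin n × Fin n × Fin σ := fun v =>
    if h : v.dropLast ∈ pathLang G f then
      (h.choose, h.choose_spec.choose, v.getLastD a0)
    else (v0, v0, a0)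
  have hinj : Set.InjOn F (MAW (pathLang G f)) := by
    rintro v₁ ⟨hl₁, -, -, hd₁⟩ v₂ ⟨hl₂, -, -, hd₂⟩ hF
    simp only [F, dif_pos hd₁, dif_pos hd₂, Prod.mk.injEq] at hF
    obtain ⟨hu, hw, ha⟩ := hF
    obtain ⟨p₁, hp₁, he₁⟩ := hd₁.choose_spec.choose_spec
    obtain ⟨p₂, hp₂, he₂⟩ := hd₂.choose_spec.choose_spec
    have hdl : v₁.dropLast = v₂.dropLast := by
      rw [he₁, he₂,
        (hG.existsUnique_path _ _).unique hp₁
          ((SimpleGraph.Walk.isPath_copy _ hu.symm hw.symm).mpr hp₂ : (p₂.copy hu.symm hw.symm).IsPath),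
        SimpleGraph.Walk.darts_copy]
    have hne₁ : v₁ ≠ [] := by intro h; simp [h] at hl₁
    have hne₂ : v₂ ≠ [] := by intro h; simp [h] at hl₂
    rw [← dropLast_append_getLastD a0 v₁ hne₁, ← dropLast_append_getLastD a0 v₂ hne₂,
      hdl, ha]
  have hfin : (MAW (pathLang G f)).Finite :=
    Set.Finite.of_finite_image (Set.toFinite _) hinj
  refine ⟨hfin, ?_⟩
  have hle : (MAW (pathLang G f)).ncard ≤ (Set.univ : Set (Fin n × Fin n × Fin σ)).ncard :=
    Set.ncard_le_ncard_of_injOn F (fun a _ => Set.mem_univ _) hinj (Set.toFinite _)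
  calc (MAW (pathLang G f)).ncard ≤ (Set.univ : Set (Fin n × Fin n × Fin σ)).ncard := hle
    _ = n ^ 2 * σ := by
        rw [Set.ncard_univ]
        simp [Nat.card_eq_fintype_card]
        ring
end
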